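/- For any balanced defining set (S₁,…,S_{2t}) of {1,…,4t} and any allowed swap collection I, the total discrepancy after applying the swaps of I has the same parity as 0 modulo 2; i.e., Σ_{i=1}^{t} |Σ(S'_{2i−1}) − Σ(S'_{2i})| is an even integer. -/
import Mathlib


/-- Applying the collection of adjacent swaps with left endpoints in `I`. -/
def swapFun (I : Finset ℕ) (x : ℕ) : ℕ :=
  if x ∈ I then x + 1 else if x - 1 ∈ I ∧ 1 ≤ x then x - 1 else x

lemma swapFun_involutive (I : Finset ℕ)
    (hIdist : ∀ i ∈ I, ∀ j ∈ I, i ≠ j → i + 1 ≠ j ∧ j + 1 ≠ i) :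
    Function.Involutive (swapFun I) := by
  intro x
  unfold swapFun
  by_cases hx : x ∈ I
  · simp only [hx, if_true]
    have h1 : x + 1 ∉ I := by
      intro h
      exact (hIdist x hx (x + 1) h (by omega)).1 rfl
    rw [if_neg h1, if_pos ⟨by simpa using hx, by omega⟩]
    omega
  · by_cases hx1 : x - 1 ∈ I ∧ 1 ≤ x
    · rw [if_neg hx, if_pos hx1, if_pos hx1.1]
      omega
    · rw [if_neg hx, if_neg hx1, if_neg hx, if_neg hx1]

lemma sum_range_two_mul {M : Type*} [AddCommMonoid M] (t : ℕ) (u : ℕ → M) :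
    ∑ i ∈ Finset.range (2 * t), u i = ∑ i ∈ Finset.range t, (u (2 * i) + u (2 * i + 1)) := by
  induction t with
  | zero => simp
  | succ n ih =>
      rw [Finset.sum_range_succ, ← ih, show 2 * (n + 1) = (2 * n + 1) + 1 from by ring,
        Finset.sum_range_succ, Finset.sum_range_succ, add_assoc]

theorem stmt_6 (t : ℕ) (g : ℕ → Finset ℕ) (I : Finset ℕ) (ht : 0 < t)
    (hcard : ∀ i < 2 * t, (g i).card = 2)
    (hdisj : ∀ i < 2 * t, ∀ j < 2 * t, i ≠ j → Disjoint (g i) (g j))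
    (hunion : (Finset.range (2 * t)).biUnion g = Finset.Icc 1 (4 * t))
    (hbal : ∀ i < t, (g (2 * i)).sum id = (g (2 * i + 1)).sum id)
    (hIrange : ∀ i ∈ I, 1 ≤ i ∧ i < 4 * t)
    (hIdist : ∀ i ∈ I, ∀ j ∈ I, i ≠ j → i + 1 ≠ j ∧ j + 1 ≠ i) :
    Even (∑ i ∈ Finset.range t,
      |(((g (2 * i)).image (swapFun I)).sum (fun x => (x : ℤ)) -
        ((g (2 * i + 1)).image (swapFun I)).sum (fun x => (x : ℤ)))|) := by
  have hinv := swapFun_involutive I hIdist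
  have hinj : Function.Injective (swapFun I) := hinv.injective
  have hneg : ∀ a : ZMod 2, -a = a := by decide
  have hsub : ∀ a b : ZMod 2, a - b = a + b := by decide
  -- reduce to a computation in ZMod 2
  suffices h : ((∑ i ∈ Finset.range t,
      |(((g (2 * i)).image (swapFun I)).sum (fun x => (x : ℤ)) -
        ((g (2 * i + 1)).image (swapFun I)).sum (fun x => (x : ℤ)))| : ℤ) : ZMod 2) = 0 by
    rw [even_iff_two_dvd]
    exact_mod_cast (ZMod.intCast_zmod_eq_zero_iff_dvd _ 2).mp h
  push_cast
  have habs : ∀ d : ℤ, ((|d| : ℤ) : ZMod 2) = ((d : ℤ) : ZMod 2) := by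
    intro d
    rcases abs_choice d with h | h <;> rw [h]
    push_cast
    exact hneg _
  rw [Finset.sum_congr rfl (fun i _ => habs _)]
  push_cast
  -- rewrite sums over images as sums over the original pairs
  have himg : ∀ s : Finset ℕ,
      ∑ x ∈ s.image (swapFun I), (x : ZMod 2) = ∑ x ∈ s, (swapFun I x : ZMod 2) :=
    fun s => Finset.sum_image (fun a _ b _ h => hinj h)
  simp only [himg, hsub]
  rw [← sum_range_two_mul t (fun j => ∑ x ∈ g j, ((swapFun I x : ℕ) : ZMod 2))]
  have hpd : Set.PairwiseDisjoint ↑(Finset.range (2 * t)) g := by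
    intro a ha b hb hab
    exact hdisj a (by simpa using ha) b (by simpa using hb) hab
  rw [← Finset.sum_biUnion hpd, hunion]
  -- swapFun permutes Icc 1 (4t)
  have hmap : ∀ x ∈ Finset.Icc 1 (4 * t), swapFun I x ∈ Finset.Icc 1 (4 * t) := by
    intro x hx
    simp only [Finset.mem_Icc] at hx ⊢
    unfold swapFun
    split_ifs with h1 h2
    · have := hIrange x h1; omega
    · have := hIrange _ h2.1; omega
    · omega
  have hic : (Finset.Icc 1 (4 * t)).image (swapFun I) = Finset.Icc 1 (4 * t) := by
    apply Finset.eq_of_subset_of_card_le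
    · intro y hy
      obtain ⟨x, hx, rfl⟩ := Finset.mem_image.mp hy
      exact hmap x hx
    · rw [Finset.card_image_of_injective _ hinj]
  have : ∑ x ∈ Finset.Icc 1 (4 * t), (swapFun I x : ZMod 2)
      = ∑ x ∈ Finset.Icc 1 (4 * t), (x : ZMod 2) := by
    rw [← himg, hic]
  rw [this, ← Nat.cast_sum, ZMod.natCast_eq_zero_iff]
  -- Gauss sum is even
  have hgauss := Finset.sum_range_id_mul_two (4 * t + 1)
  have hIcc : ∑ x ∈ Finset.Icc 1 (4 * t), x = ∑ x ∈ Finset.range (4 * t + 1), x := by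
    rw [← Finset.Ico_add_one_right_eq_Icc, Finset.range_eq_Ico]
    symm
    rw [Finset.sum_eq_sum_Ico_succ_bot (by omega : 0 < 4 * t + 1) (fun x => x)]
    simp [Nat.succ_eq_add_one]
  rw [hIcc]
  refine ⟨t * (4 * t + 1), ?_⟩
  simp only [Nat.add_sub_cancel] at hgauss
  have key : (4 * t + 1) * (4 * t) = 2 * (t * (4 * t + 1)) * 2 := by ring
  rw [key] at hgauss
  exact Nat.eq_of_mul_eq_mul_right two_pos hgauss
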